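/- If the evolute γ̃ is C¹-regular (i.e. admits a C¹ reparametrization with nowhere-vanishing derivative), then the signed radius of curvature R is strictly monotone on (a,b). -/

import Mathlib

open Set Real Topology Filter
open scoped NNReal

noncomputable section

/-- The Euclidean plane. -/
abbrev Plane := EuclideanSpace ℝ (Fin 2)

/-- Rotation of a plane vector by `+π/2`. -/
def Jrot (v : Plane) : Plane := WithLp.toLp 2 ![-(v 1), v 0]

local notation "⟪" x ", " y "⟫" => @inner ℝ _ _ x y

/-- `f` is of class `C^{k,α}` on `s` : it is `C^k` there and (when `α ≠ 0`) its `k`-th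
derivative is `α`-Hölder continuous on `s`.  (`α = 0` means plain `C^k`.) -/
def IsCkAlphaOn (k : ℕ) (α : ℝ≥0) (f : ℝ → Plane) (s : Set ℝ) : Prop :=
  ContDiffOn ℝ k f s ∧ (α = 0 ∨ ∃ C : ℝ≥0, HolderOnWith C α (iteratedDeriv k f) s)

/-- The curve `f` restricted to `(u,v)` is `C^{k,α}`-regular: it admits a
reparametrization of class `C^{k,α}` whose derivative never vanishes. -/
def CkAlphaRegularOn (k : ℕ) (α : ℝ≥0) (f : ℝ → Plane) (u v : ℝ) : Prop :=
  ∃ c d : ℝ, c < d ∧ ∃ φ : ℝ → ℝ,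
    ContinuousOn φ (Set.Ioo c d) ∧ Set.BijOn φ (Set.Ioo c d) (Set.Ioo u v) ∧
    IsCkAlphaOn k α (f ∘ φ) (Set.Ioo c d) ∧
    ∀ t ∈ Set.Ioo c d, deriv (f ∘ φ) t ≠ 0



lemma Jrot_apply0 (v : Plane) : Jrot v 0 = -(v 1) := rfl
lemma Jrot_apply1 (v : Plane) : Jrot v 1 = v 0 := rfl

lemma inner_two (x y : Plane) : ⟪x, y⟫ = x 0 * y 0 + x 1 * y 1 := by
  simp [PiLp.inner_apply, Fin.sum_univ_two, RCLike.inner_apply, mul_comm]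

lemma Jrot_add (v w : Plane) : Jrot (v + w) = Jrot v + Jrot w := by
  ext i
  fin_cases i <;> simp [Jrot] <;> ring

lemma Jrot_smul (r : ℝ) (v : Plane) : Jrot (r • v) = r • Jrot v := by
  ext i
  fin_cases i <;> simp [Jrot] <;> ring

lemma Jrot_Jrot (v : Plane) : Jrot (Jrot v) = -v := by
  ext i
  fin_cases i <;> simp [Jrot]

lemma inner_Jrot_Jrot (v w : Plane) : ⟪Jrot v, Jrot w⟫ = ⟪v, w⟫ := by
  simp [inner_two, Jrot] ; ring

lemma inner_Jrot_self (v : Plane) : ⟪Jrot v, v⟫ = 0 := by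
  simp [inner_two, Jrot] ; ring

/-- Pythagoras with the orthonormal basis (T, Jrot T) when ⟪T,T⟫ = 1. -/
lemma sq_decomp (T w : Plane) (hT : ⟪T, T⟫ = 1) :
    ⟪w, T⟫ ^ 2 + ⟪w, Jrot T⟫ ^ 2 = ⟪w, w⟫ := by
  simp only [inner_two, Jrot] at *
  simp at *
  nlinarith [hT]

/-- decomposition in the orthonormal basis. -/
lemma vec_decomp (T w : Plane) (hT : ⟪T, T⟫ = 1) :
    w = ⟪w, T⟫ • T + ⟪w, Jrot T⟫ • Jrot T := by
  ext i
  simp only [inner_two] at *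
  fin_cases i <;>
      simp [Jrot, PiLp.add_apply, PiLp.smul_apply, smul_eq_mul]
  · linear_combination (-(w 0)) * hT
  · linear_combination (-(w 1)) * hT

def JL : Plane →L[ℝ] Plane :=
  LinearMap.toContinuousLinearMap
    { toFun := Jrot
      map_add' := Jrot_add
      map_smul' := fun r v => by simpa using Jrot_smul r v }

lemma JL_apply (v : Plane) : JL v = Jrot v := rfl

lemma hasDerivAt_Jrot {f : ℝ → Plane} {v : Plane} {x : ℝ} (hf : HasDerivAt f v x) :
    HasDerivAt (fun t => Jrot (f t)) (Jrot v) x := by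
  exact (JL.hasFDerivAt.comp_hasDerivAt x hf)

lemma norm_Jrot (v : Plane) : ‖Jrot v‖ = ‖v‖ := by
  rw [← Real.sqrt_sq (norm_nonneg (Jrot v)), ← Real.sqrt_sq (norm_nonneg v)]
  rw [← real_inner_self_eq_norm_sq, ← real_inner_self_eq_norm_sq, inner_Jrot_Jrot]


lemma continuous_Jrot : Continuous Jrot := by
  have h : Jrot = fun v => JL v := funext (fun v => rfl)
  rw [h]
  exact JL.continuous

lemma abs_sub_le_of_mem_uIcc {σ a b : ℝ} (h : σ ∈ uIcc a b) : |σ - a| ≤ |b - a| := by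
  rcases le_total a b with hab | hab
  · rw [uIcc_of_le hab] at h
    rw [abs_of_nonneg (by linarith [h.1]), abs_of_nonneg (by linarith)]
    linarith [h.2]
  · rw [uIcc_of_ge hab] at h
    rw [abs_of_nonpos (by linarith [h.2]), abs_of_nonpos (by linarith)]
    linarith [h.1]

lemma norm_eq_one_of_inner (v : Plane) (h : ⟪v, v⟫ = 1) : ‖v‖ = 1 := by
  have := real_inner_self_eq_norm_sq v
  nlinarith [norm_nonneg v]

/-- KEY estimates on the evolute displacement. -/
lemma key_est (γ T ν : ℝ → Plane) (κ R : ℝ → ℝ) (ev : ℝ → Plane)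
    (s₀ s : ℝ) (I : Set ℝ) (hIconv : Convex ℝ I)
    (Kκ W : ℝ) (hKκ : 1 ≤ Kκ) (hW : 0 ≤ W)
    (hγ' : ∀ σ ∈ I, HasDerivAt γ (T σ) σ)
    (hT' : ∀ σ ∈ I, HasDerivAt T (κ σ • ν σ) σ)
    (hν' : ∀ σ ∈ I, HasDerivAt ν (-(κ σ) • T σ) σ)
    (hTunit : ∀ σ ∈ I, ⟪T σ, T σ⟫ = 1)
    (hνdef : ∀ σ, ν σ = Jrot (T σ))
    (hκbd : ∀ σ ∈ I, |κ σ| ≤ Kκ)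
    (hRκ : ∀ σ ∈ I, R σ * κ σ = 1)
    (hev : ∀ σ, ev σ = γ σ + R σ • ν σ)
    (hs₀ : s₀ ∈ I) (hs : s ∈ I)
    (hIcc : uIcc s₀ s ⊆ I)
    (hWbd : ∀ σ ∈ uIcc s₀ s, |R σ - R s₀| ≤ W) :
    |⟪ev s - ev s₀, T s₀⟫| ≤ 2 * Kκ * W * |s - s₀| ∧
    |⟪ev s - ev s₀, ν s₀⟫ - (R s - R s₀) * ⟪ν s, ν s₀⟫| ≤ Kκ ^ 2 * W * |s - s₀| ^ 2 := by
  set U := uIcc s₀ s with hU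
  have hUconv : Convex ℝ U := convex_uIcc s₀ s
  have hs₀U : s₀ ∈ U := left_mem_uIcc
  have hsU : s ∈ U := right_mem_uIcc
  have hTnorm : ∀ σ ∈ I, ‖T σ‖ = 1 := fun σ hσ => norm_eq_one_of_inner _ (hTunit σ hσ)
  have hνnorm : ∀ σ ∈ I, ‖ν σ‖ = 1 := fun σ hσ => by
    rw [hνdef]; rw [norm_Jrot]; exact hTnorm σ hσ
  have hνT0 : ∀ σ ∈ I, ⟪ν σ, T σ⟫ = 0 := fun σ hσ => by rw [hνdef]; exact inner_Jrot_self _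
  have hνν : ∀ σ τ, ⟪ν σ, ν τ⟫ = ⟪T σ, T τ⟫ := fun σ τ => by
    rw [hνdef, hνdef]; exact inner_Jrot_Jrot _ _
  -- Cauchy-Schwarz helpers
  have hCS : ∀ x y : Plane, ‖x‖ = 1 → ‖y‖ = 1 → |⟪x, y⟫| ≤ 1 := by
    intro x y hx hy
    calc |⟪x, y⟫| ≤ ‖x‖ * ‖y‖ := abs_real_inner_le_norm x y
    _ = 1 := by rw [hx, hy]; ring
  -- |1 - R s₀ * κ σ| ≤ Kκ * W for σ ∈ U
  have hfac : ∀ σ ∈ U, |1 - R s₀ * κ σ| ≤ Kκ * W := by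
    intro σ hσ
    have hσI := hIcc hσ
    have h1 : 1 - R s₀ * κ σ = κ σ * (R σ - R s₀) := by
      have := hRκ σ hσI; nlinarith [this]
    rw [h1, abs_mul]
    exact mul_le_mul (hκbd σ hσI) (hWbd σ hσ) (abs_nonneg _) (le_trans zero_le_one hKκ)
  -- bound |⟪T σ, ν s₀⟫| ≤ Kκ * |σ - s₀| on U
  have bnd1 : ∀ σ ∈ U, |⟪T σ, ν s₀⟫| ≤ Kκ * |σ - s₀| := by
    intro σ hσ
    have hmvt := Convex.norm_image_sub_le_of_norm_hasDerivWithin_le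
      (f := fun τ => ⟪T τ, ν s₀⟫) (f' := fun τ => ⟪κ τ • ν τ, ν s₀⟫) (s := U) (C := Kκ)
      (fun τ hτ => (((hT' τ (hIcc hτ)).inner ℝ (hasDerivAt_const τ (ν s₀))).congr_deriv
        (by simp)).hasDerivWithinAt)
      (fun τ hτ => by
        show ‖⟪κ τ • ν τ, ν s₀⟫‖ ≤ Kκ
        rw [Real.norm_eq_abs, real_inner_smul_left, abs_mul]
        calc |κ τ| * |⟪ν τ, ν s₀⟫| ≤ Kκ * 1 := by
              apply mul_le_mul (hκbd τ (hIcc hτ))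
                (hCS _ _ (hνnorm τ (hIcc hτ)) (hνnorm s₀ hs₀)) (abs_nonneg _)
                (le_trans zero_le_one hKκ)
        _ = Kκ := mul_one Kκ)
      hUconv hs₀U hσ
    beta_reduce at hmvt
    have h0 : ⟪T s₀, ν s₀⟫ = 0 := by
      conv_lhs => rw [hνdef]
      rw [real_inner_comm]; exact inner_Jrot_self _
    beta_reduce at hmvt
    rw [Real.norm_eq_abs, Real.norm_eq_abs, h0, sub_zero] at hmvt
    exact hmvt
  -- bound |⟪ν σ, T s₀⟫| ≤ Kκ * |σ - s₀| on U
  have bnd2 : ∀ σ ∈ U, |⟪ν σ, T s₀⟫| ≤ Kκ * |σ - s₀| := by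
    intro σ hσ
    have hmvt := Convex.norm_image_sub_le_of_norm_hasDerivWithin_le
      (f := fun τ => ⟪ν τ, T s₀⟫) (f' := fun τ => ⟪-(κ τ) • T τ, T s₀⟫) (s := U) (C := Kκ)
      (fun τ hτ => (((hν' τ (hIcc hτ)).inner ℝ (hasDerivAt_const τ (T s₀))).congr_deriv
        (by simp)).hasDerivWithinAt)
      (fun τ hτ => by
        show ‖⟪-(κ τ) • T τ, T s₀⟫‖ ≤ Kκ
        rw [Real.norm_eq_abs, real_inner_smul_left, abs_mul, abs_neg]
        calc |κ τ| * |⟪T τ, T s₀⟫| ≤ Kκ * 1 :=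
              mul_le_mul (hκbd τ (hIcc hτ))
                (hCS _ _ (hTnorm τ (hIcc hτ)) (hTnorm s₀ hs₀)) (abs_nonneg _)
                (le_trans zero_le_one hKκ)
        _ = Kκ := mul_one Kκ)
      hUconv hs₀U hσ
    beta_reduce at hmvt
    have h0 : ⟪ν s₀, T s₀⟫ = 0 := hνT0 s₀ hs₀
    rw [Real.norm_eq_abs, Real.norm_eq_abs, h0, sub_zero] at hmvt
    exact hmvt
  constructor
  · -- tangential estimate
    -- f₀ σ := ⟪γ σ - γ s₀, T s₀⟫ + R s₀ * ⟪ν σ, T s₀⟫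
    have hmvt := Convex.norm_image_sub_le_of_norm_hasDerivWithin_le
      (f := fun σ => ⟪γ σ - γ s₀, T s₀⟫ + R s₀ * ⟪ν σ, T s₀⟫)
      (f' := fun σ => ⟪T σ, T s₀⟫ * (1 - R s₀ * κ σ)) (s := U) (C := Kκ * W)
      (fun σ hσ => by
        have h1 : HasDerivAt (fun τ => ⟪γ τ - γ s₀, T s₀⟫) ⟪T σ, T s₀⟫ σ := by
          have := (((hγ' σ (hIcc hσ)).sub_const (γ s₀)).inner ℝ
            (hasDerivAt_const σ (T s₀)))
          simpa using this
        have h2 : HasDerivAt (fun τ => R s₀ * ⟪ν τ, T s₀⟫)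
            (R s₀ * ⟪-(κ σ) • T σ, T s₀⟫) σ := by
          have := (((hν' σ (hIcc hσ)).inner ℝ (hasDerivAt_const σ (T s₀))))
          simpa using this.const_mul (R s₀)
        have := h1.add h2
        refine (this.congr_deriv ?_).hasDerivWithinAt
        rw [real_inner_smul_left]; ring)
      (fun σ hσ => by
        show ‖⟪T σ, T s₀⟫ * (1 - R s₀ * κ σ)‖ ≤ Kκ * W
        rw [Real.norm_eq_abs, abs_mul]
        calc |⟪T σ, T s₀⟫| * |1 - R s₀ * κ σ| ≤ 1 * (Kκ * W) :=
              mul_le_mul (hCS _ _ (hTnorm σ (hIcc hσ)) (hTnorm s₀ hs₀)) (hfac σ hσ)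
                (abs_nonneg _) zero_le_one
        _ = Kκ * W := one_mul _)
      hUconv hs₀U hsU
    -- value at s₀ is 0
    beta_reduce at hmvt
    have h0 : ⟪γ s₀ - γ s₀, T s₀⟫ + R s₀ * ⟪ν s₀, T s₀⟫ = 0 := by
      rw [hνT0 s₀ hs₀]; simp
    rw [Real.norm_eq_abs, Real.norm_eq_abs, h0, sub_zero] at hmvt
    -- decomposition
    have hdec : ⟪ev s - ev s₀, T s₀⟫ =
        (⟪γ s - γ s₀, T s₀⟫ + R s₀ * ⟪ν s, T s₀⟫) + (R s - R s₀) * ⟪ν s, T s₀⟫ := by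
      rw [hev, hev]
      have : γ s + R s • ν s - (γ s₀ + R s₀ • ν s₀) =
          (γ s - γ s₀) + (R s • ν s - R s₀ • ν s₀) := by abel
      rw [this]
      simp only [inner_add_left, inner_sub_left, real_inner_smul_left, hνT0 s₀ hs₀]
      ring
    rw [hdec]
    calc |⟪γ s - γ s₀, T s₀⟫ + R s₀ * ⟪ν s, T s₀⟫ + (R s - R s₀) * ⟪ν s, T s₀⟫|
        ≤ |⟪γ s - γ s₀, T s₀⟫ + R s₀ * ⟪ν s, T s₀⟫| + |(R s - R s₀) * ⟪ν s, T s₀⟫| :=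
          abs_add_le _ _
      _ ≤ Kκ * W * |s - s₀| + W * (Kκ * |s - s₀|) := by
          apply add_le_add hmvt
          rw [abs_mul]
          exact mul_le_mul (hWbd s hsU) (bnd2 s hsU) (abs_nonneg _) hW
      _ = 2 * Kκ * W * |s - s₀| := by ring
  · -- normal estimate
    have hmvt := Convex.norm_image_sub_le_of_norm_hasDerivWithin_le
      (f := fun σ => ⟪γ σ - γ s₀, ν s₀⟫ + R s₀ * (⟪ν σ, ν s₀⟫ - 1))
      (f' := fun σ => ⟪T σ, ν s₀⟫ * (1 - R s₀ * κ σ)) (s := U) (C := Kκ ^ 2 * W * |s - s₀|)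
      (fun σ hσ => by
        have h1 : HasDerivAt (fun τ => ⟪γ τ - γ s₀, ν s₀⟫) ⟪T σ, ν s₀⟫ σ := by
          have := (((hγ' σ (hIcc hσ)).sub_const (γ s₀)).inner ℝ
            (hasDerivAt_const σ (ν s₀)))
          simpa using this
        have h2 : HasDerivAt (fun τ => R s₀ * (⟪ν τ, ν s₀⟫ - 1))
            (R s₀ * ⟪-(κ σ) • T σ, ν s₀⟫) σ := by
          have := ((hν' σ (hIcc hσ)).inner ℝ (hasDerivAt_const σ (ν s₀))).sub_const 1
          simpa using this.const_mul (R s₀)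
        have := h1.add h2
        refine (this.congr_deriv ?_).hasDerivWithinAt
        rw [real_inner_smul_left]; ring)
      (fun σ hσ => by
        show ‖⟪T σ, ν s₀⟫ * (1 - R s₀ * κ σ)‖ ≤ Kκ ^ 2 * W * |s - s₀|
        rw [Real.norm_eq_abs, abs_mul]
        calc |⟪T σ, ν s₀⟫| * |1 - R s₀ * κ σ| ≤ (Kκ * |σ - s₀|) * (Kκ * W) :=
              mul_le_mul (bnd1 σ hσ) (hfac σ hσ) (abs_nonneg _)
                (by positivity)
        _ ≤ (Kκ * |s - s₀|) * (Kκ * W) := by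
              apply mul_le_mul_of_nonneg_right _ (by positivity)
              exact mul_le_mul_of_nonneg_left (abs_sub_le_of_mem_uIcc hσ)
                (le_trans zero_le_one hKκ)
        _ = Kκ ^ 2 * W * |s - s₀| := by ring)
      hUconv hs₀U hsU
    beta_reduce at hmvt
    have h0 : ⟪γ s₀ - γ s₀, ν s₀⟫ + R s₀ * (⟪ν s₀, ν s₀⟫ - 1) = 0 := by
      have : ⟪ν s₀, ν s₀⟫ = 1 := by rw [hνν]; exact hTunit s₀ hs₀
      rw [this]; simp
    rw [Real.norm_eq_abs, Real.norm_eq_abs, h0, sub_zero] at hmvt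
    have hdec : ⟪ev s - ev s₀, ν s₀⟫ - (R s - R s₀) * ⟪ν s, ν s₀⟫ =
        ⟪γ s - γ s₀, ν s₀⟫ + R s₀ * (⟪ν s, ν s₀⟫ - 1) := by
      rw [hev, hev]
      have : γ s + R s • ν s - (γ s₀ + R s₀ • ν s₀) =
          (γ s - γ s₀) + (R s • ν s - R s₀ • ν s₀) := by abel
      have h1 : ⟪ν s₀, ν s₀⟫ = 1 := by rw [hνν]; exact hTunit s₀ hs₀
      rw [this]
      simp only [inner_add_left, inner_sub_left, real_inner_smul_left, h1]
      ring
    rw [hdec]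
    calc |⟪γ s - γ s₀, ν s₀⟫ + R s₀ * (⟪ν s, ν s₀⟫ - 1)|
        ≤ Kκ ^ 2 * W * |s - s₀| * |s - s₀| := hmvt
      _ = Kκ ^ 2 * W * |s - s₀| ^ 2 := by ring

set_option maxHeartbeats 1600000 in
lemma main_local (γ T ν : ℝ → Plane) (κ R : ℝ → ℝ) (ev : ℝ → Plane) (φ : ℝ → ℝ)
    (a b c d t₀ : ℝ)
    (hγ' : ∀ s ∈ Ioo a b, HasDerivAt γ (T s) s)
    (hT' : ∀ s ∈ Ioo a b, HasDerivAt T (κ s • ν s) s)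
    (hν' : ∀ s ∈ Ioo a b, HasDerivAt ν (-(κ s) • T s) s)
    (hTunit : ∀ s ∈ Ioo a b, ⟪T s, T s⟫ = 1)
    (hνdef : ∀ s, ν s = Jrot (T s))
    (hκcont : ContinuousOn κ (Ioo a b))
    (hRcont : ContinuousOn R (Ioo a b))
    (hRκ : ∀ s ∈ Ioo a b, R s * κ s = 1)
    (hev : ∀ s, ev s = γ s + R s • ν s)
    (hνcont : ContinuousOn ν (Ioo a b))
    (hφc : ContinuousOn φ (Ioo c d)) (hφm : MapsTo φ (Ioo c d) (Ioo a b))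
    (hgc1 : ContDiffOn ℝ 1 (ev ∘ φ) (Ioo c d))
    (ht₀ : t₀ ∈ Ioo c d)
    (hg'ne : deriv (ev ∘ φ) t₀ ≠ 0) :
    HasDerivAt (fun t => R (φ t)) ⟪deriv (ev ∘ φ) t₀, ν (φ t₀)⟫ t₀ ∧
    ⟪deriv (ev ∘ φ) t₀, ν (φ t₀)⟫ ≠ 0 := by
  set g := ev ∘ φ with hgdef
  set s₀ := φ t₀ with hs₀def
  have hs₀ : s₀ ∈ Ioo a b := hφm ht₀
  set G := deriv g t₀ with hGdef
  set u₀ : ℝ := ⟪G, ν s₀⟫ with hu₀def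
  -- choose δ1 with Icc (s₀ - δ1) (s₀ + δ1) ⊆ Ioo a b
  set δ1 : ℝ := min (s₀ - a) (b - s₀) / 2 with hδ1def
  have hδ1pos : 0 < δ1 := by
    have h1 : 0 < s₀ - a := by linarith [hs₀.1]
    have h2 : 0 < b - s₀ := by linarith [hs₀.2]
    have := lt_min h1 h2
    positivity
  have hK1sub : Icc (s₀ - δ1) (s₀ + δ1) ⊆ Ioo a b := by
    apply Icc_subset_Ioo
    · have := min_le_left (s₀ - a) (b - s₀); linarith
    · have := min_le_right (s₀ - a) (b - s₀); linarith
  -- bound for κ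
  obtain ⟨C1, hC1⟩ := (isCompact_Icc (a := s₀ - δ1) (b := s₀ + δ1)).exists_bound_of_continuousOn
    (hκcont.mono hK1sub)
  set Kκ := max C1 1 with hKκdef
  have hKκ : 1 ≤ Kκ := le_max_right _ _
  have hKκ0 : 0 < Kκ := lt_of_lt_of_le one_pos hKκ
  have hκbd1 : ∀ σ ∈ Icc (s₀ - δ1) (s₀ + δ1), |κ σ| ≤ Kκ := fun σ hσ =>
    le_trans (hC1 σ hσ) (le_max_left _ _)
  -- β and its continuity
  set β : ℝ → ℝ := fun σ => ⟪ν σ, ν s₀⟫ with hβdef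
  have hνcontAt : ContinuousAt ν s₀ := hνcont.continuousAt (isOpen_Ioo.mem_nhds hs₀)
  have hβcontAt : ContinuousAt β s₀ := hνcontAt.inner continuousAt_const
  have hβs₀ : β s₀ = 1 := by
    show ⟪ν s₀, ν s₀⟫ = 1
    rw [hνdef, inner_Jrot_Jrot]
    exact hTunit s₀ hs₀
  have hβev : ∀ᶠ σ in 𝓝 s₀, 1/2 < β σ := by
    have : Tendsto β (𝓝 s₀) (𝓝 1) := by rw [← hβs₀]; exact hβcontAt
    exact this.eventually (eventually_gt_nhds (by norm_num))
  obtain ⟨εβ, hεβpos, hεβ⟩ := Metric.eventually_nhds_iff.1 hβev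
  -- choose δ
  set δ : ℝ := min (min δ1 (εβ / 2)) (1 / (2 * Kκ)) with hδdef
  have hδpos : 0 < δ := by
    apply lt_min (lt_min hδ1pos (by linarith))
    rw [one_div]
    apply inv_pos.mpr
    linarith
  have hδδ1 : δ ≤ δ1 := le_trans (min_le_left _ _) (min_le_left _ _)
  have hδεβ : δ < εβ := lt_of_le_of_lt (le_trans (min_le_left _ _) (min_le_right _ _))
    (by linarith)
  have hδKκ : Kκ * δ ≤ 1 / 2 := by
    have h := min_le_right (min δ1 (εβ / 2)) (1 / (2 * Kκ))
    calc Kκ * δ ≤ Kκ * (1 / (2 * Kκ)) := by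
          exact mul_le_mul_of_nonneg_left h (le_of_lt hKκ0)
    _ = 1 / 2 := by field_simp
  set I : Set ℝ := Icc (s₀ - δ) (s₀ + δ) with hIdef
  have hIsubK1 : I ⊆ Icc (s₀ - δ1) (s₀ + δ1) := Icc_subset_Icc (by linarith) (by linarith)
  have hIsub : I ⊆ Ioo a b := fun x hx => hK1sub (hIsubK1 hx)
  have hs₀I : s₀ ∈ I := by rw [hIdef, mem_Icc]; constructor <;> linarith
  have hβI : ∀ σ ∈ I, 1/2 ≤ β σ := by
    intro σ hσ
    apply le_of_lt
    apply hεβ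
    rw [Real.dist_eq, abs_lt]
    rw [hIdef, mem_Icc] at hσ
    constructor <;> linarith [hσ.1, hσ.2]
  have hβle1 : ∀ σ ∈ I, β σ ≤ 1 := by
    intro σ hσ
    have : |β σ| ≤ 1 := by
      calc |β σ| ≤ ‖ν σ‖ * ‖ν s₀‖ := abs_real_inner_le_norm _ _
      _ = 1 := by
          rw [hνdef, hνdef, norm_Jrot, norm_Jrot,
            norm_eq_one_of_inner _ (hTunit σ (hIsub hσ)),
            norm_eq_one_of_inner _ (hTunit s₀ hs₀)]
          norm_num
    have h2 := (abs_le.1 this).2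
    linarith
  have hKκδ2 : Kκ ^ 2 * δ ^ 2 ≤ 1 / 4 := by nlinarith [hδpos, hKκ0, hδKκ, mul_pos hKκ0 hδpos]
  -- choose δt on the t side
  have hφcontAt : ContinuousAt φ t₀ := hφc.continuousAt (isOpen_Ioo.mem_nhds ht₀)
  have : ∀ᶠ τ in 𝓝 t₀, |φ τ - s₀| < δ := by
    have : Tendsto φ (𝓝 t₀) (𝓝 s₀) := hφcontAt
    have hmem : {x : ℝ | |x - s₀| < δ} ∈ 𝓝 s₀ := by
      have := Metric.ball_mem_nhds s₀ hδpos
      simpa [Metric.ball, Real.dist_eq] using this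
    exact this hmem
  obtain ⟨r0, hr0pos, hr0⟩ := Metric.eventually_nhds_iff.1 this
  set δt : ℝ := min (r0 / 2) (min ((t₀ - c) / 2) ((d - t₀) / 2)) with hδtdef
  have hδtpos : 0 < δt := by
    have h1 := ht₀.1; have h2 := ht₀.2
    apply lt_min (by positivity)
    apply lt_min <;> linarith
  set J : Set ℝ := Icc (t₀ - δt) (t₀ + δt) with hJdef
  have hJsub : J ⊆ Ioo c d := by
    have h1 : δt ≤ (t₀ - c)/2 := le_trans (min_le_right _ _) (min_le_left _ _)
    have h2 : δt ≤ (d - t₀)/2 := le_trans (min_le_right _ _) (min_le_right _ _)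
    have h3 := ht₀.1; have h4 := ht₀.2
    apply Icc_subset_Ioo <;> linarith
  have ht₀J : t₀ ∈ J := by rw [hJdef, mem_Icc]; constructor <;> linarith
  have hJI : ∀ τ ∈ J, φ τ ∈ I := by
    intro τ hτ
    rw [hJdef, mem_Icc] at hτ
    have hd : dist τ t₀ < r0 := by
      rw [Real.dist_eq, abs_lt]
      have := min_le_left (r0/2) (min ((t₀ - c)/2) ((d - t₀)/2))
      constructor <;> linarith [hτ.1, hτ.2]
    have h9 := le_of_lt (hr0 hd)
    rw [abs_le] at h9
    rw [hIdef, mem_Icc]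
    exact ⟨by linarith [h9.1], by linarith [h9.2]⟩
  -- bound for deriv g on J
  have hJcompact : IsCompact J := isCompact_Icc
  have hg'cont : ContinuousOn (deriv g) (Ioo c d) :=
    hgc1.continuousOn_deriv_of_isOpen isOpen_Ioo le_rfl
  obtain ⟨C2, hC2⟩ := hJcompact.exists_bound_of_continuousOn (hg'cont.mono hJsub)
  set M := max C2 1 with hMdef
  have hM1 : 1 ≤ M := le_max_right _ _
  have hM0 : 0 < M := lt_of_lt_of_le one_pos hM1
  have hMbd : ∀ τ ∈ J, ‖deriv g τ‖ ≤ M := fun τ hτ => le_trans (hC2 τ hτ) (le_max_left _ _)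
  have hgdiffAt : ∀ τ ∈ Ioo c d, HasDerivAt g (deriv g τ) τ := by
    intro τ hτ
    exact ((hgc1.differentiableOn one_ne_zero).differentiableAt
      (isOpen_Ioo.mem_nhds hτ)).hasDerivAt
  have hgLip : ∀ τ ∈ J, ∀ τ' ∈ J, ‖g τ - g τ'‖ ≤ M * |τ - τ'| := by
    intro τ hτ τ' hτ'
    have := Convex.norm_image_sub_le_of_norm_hasDerivWithin_le
      (f := g) (f' := deriv g) (s := J) (C := M)
      (fun x hx => (hgdiffAt x (hJsub hx)).hasDerivWithinAt)
      (fun x hx => hMbd x hx) (convex_Icc _ _) hτ' hτ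
    rw [Real.norm_eq_abs] at this
    exact this
  -- unit norms
  have hνnorm : ∀ σ ∈ Ioo a b, ‖ν σ‖ = 1 := by
    intro σ hσ
    rw [hνdef, norm_Jrot]
    exact norm_eq_one_of_inner _ (hTunit σ hσ)
  have hTnorm : ∀ σ ∈ Ioo a b, ‖T σ‖ = 1 := fun σ hσ => norm_eq_one_of_inner _ (hTunit σ hσ)
  -- key_est hypotheses restricted to I
  have kγ' : ∀ σ ∈ I, HasDerivAt γ (T σ) σ := fun σ hσ => hγ' σ (hIsub hσ)
  have kT' : ∀ σ ∈ I, HasDerivAt T (κ σ • ν σ) σ := fun σ hσ => hT' σ (hIsub hσ)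
  have kν' : ∀ σ ∈ I, HasDerivAt ν (-(κ σ) • T σ) σ := fun σ hσ => hν' σ (hIsub hσ)
  have kTunit : ∀ σ ∈ I, ⟪T σ, T σ⟫ = 1 := fun σ hσ => hTunit σ (hIsub hσ)
  have kκbd : ∀ σ ∈ I, |κ σ| ≤ Kκ := fun σ hσ => hκbd1 σ (hIsubK1 hσ)
  have kRκ : ∀ σ ∈ I, R σ * κ σ = 1 := fun σ hσ => hRκ σ (hIsub hσ)
  have hIconv : Convex ℝ I := convex_Icc _ _
  have hIord : OrdConnected I := ordConnected_Icc
  have hJord : OrdConnected J := ordConnected_Icc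
  -- bootstrap bound: variation of R ∘ φ controlled by M |t - t₀|
  have hD : ∀ t ∈ J, ∀ σ ∈ uIcc t₀ t, |R (φ σ) - R s₀| ≤ 4 * M * |t - t₀| := by
    intro t ht
    set K : Set ℝ := uIcc t₀ t with hKdef
    have hKJ : K ⊆ J := hJord.uIcc_subset ht₀J ht
    have hKIoo : K ⊆ Ioo c d := fun x hx => hJsub (hKJ hx)
    have hcontf : ContinuousOn (fun σ => |R (φ σ) - R s₀|) K := by
      apply ContinuousOn.abs
      apply ContinuousOn.sub _ continuousOn_const
      exact hRcont.comp (hφc.mono hKIoo) (fun x hx => hφm (hKIoo hx))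
    obtain ⟨σm, hσmK, hσmax⟩ := isCompact_uIcc.exists_isMaxOn nonempty_uIcc hcontf
    set D := |R (φ σm) - R s₀| with hDdef
    have hDnonneg : 0 ≤ D := abs_nonneg _
    -- every point of uIcc s₀ (φ σ') is a value of R ∘ φ on uIcc t₀ σ'
    have hWbd : ∀ σ' ∈ K, ∀ x ∈ uIcc s₀ (φ σ'), |R x - R s₀| ≤ D := by
      intro σ' hσ' x hx
      have hiv : uIcc (φ t₀) (φ σ') ⊆ φ '' uIcc t₀ σ' :=
        intermediate_value_uIcc (hφc.mono (fun y hy => hKIoo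
          ((uIcc_subset_uIcc left_mem_uIcc hσ') hy)))
      obtain ⟨τ, hτ, hφτ⟩ := hiv hx
      rw [← hφτ]
      exact hσmax ((uIcc_subset_uIcc left_mem_uIcc hσ') hτ)
    have hDle : D ≤ 4 * M * |t - t₀| := by
      have hφσmI : φ σm ∈ I := hJI σm (hKJ hσmK)
      have hsub2 : uIcc s₀ (φ σm) ⊆ I := hIord.uIcc_subset hs₀I hφσmI
      have hkey := key_est γ T ν κ R ev s₀ (φ σm) I hIconv Kκ D hKκ hDnonneg
        kγ' kT' kν' kTunit hνdef kκbd kRκ hev hs₀I hφσmI hsub2 (hWbd σm hσmK)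
      have hb := hkey.2
      -- |φ σm - s₀| ≤ δ
      have hd1 : |φ σm - s₀| ≤ δ := by
        have h := hφσmI
        rw [hIdef, mem_Icc] at h
        rw [abs_le]; exact ⟨by linarith [h.1], by linarith [h.2]⟩
      have herr : Kκ ^ 2 * D * |φ σm - s₀| ^ 2 ≤ D / 4 := by
        have h2 : |φ σm - s₀| ^ 2 ≤ δ ^ 2 := by
          have := abs_nonneg (φ σm - s₀)
          nlinarith
        calc Kκ ^ 2 * D * |φ σm - s₀| ^ 2 ≤ Kκ ^ 2 * D * δ ^ 2 :=
              mul_le_mul_of_nonneg_left h2 (by positivity)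
        _ = (Kκ ^ 2 * δ ^ 2) * D := by ring
        _ ≤ (1/4) * D := mul_le_mul_of_nonneg_right hKκδ2 hDnonneg
        _ = D / 4 := by ring
      -- ev (φ σm) - ev s₀ = g σm - g t₀, and |⟪·,ν s₀⟫| ≤ M |σm - t₀|
      have hgval : ev (φ σm) - ev (φ t₀) = g σm - g t₀ := rfl
      have hn : |⟪g σm - g t₀, ν s₀⟫| ≤ M * |t - t₀| := by
        calc |⟪g σm - g t₀, ν s₀⟫| ≤ ‖g σm - g t₀‖ * ‖ν s₀‖ := abs_real_inner_le_norm _ _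
        _ = ‖g σm - g t₀‖ := by rw [hνnorm s₀ hs₀, mul_one]
        _ ≤ M * |σm - t₀| := hgLip σm (hKJ hσmK) t₀ ht₀J
        _ ≤ M * |t - t₀| := mul_le_mul_of_nonneg_left (abs_sub_le_of_mem_uIcc hσmK)
            (le_of_lt hM0)
      have hβm : 1/2 ≤ β (φ σm) := hβI _ hφσmI
      have habs : D * (1/2) ≤ D * β (φ σm) :=
        mul_le_mul_of_nonneg_left hβm hDnonneg
      have h5 : |(R (φ σm) - R s₀) * β (φ σm)| = D * β (φ σm) := by
        rw [abs_mul, abs_of_nonneg (by linarith : (0:ℝ) ≤ β (φ σm))]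
      have hb2 : |⟪g σm - g t₀, ν s₀⟫ - (R (φ σm) - R s₀) * β (φ σm)| ≤ D / 4 := by
        have h8 := hb
        rw [hgval] at h8
        exact le_trans h8 herr
      have h6 : |(R (φ σm) - R s₀) * β (φ σm)| ≤
          |⟪g σm - g t₀, ν s₀⟫| + D / 4 := by
        have heq : ⟪g σm - g t₀, ν s₀⟫ +
            ((R (φ σm) - R s₀) * β (φ σm) - ⟪g σm - g t₀, ν s₀⟫) =
            (R (φ σm) - R s₀) * β (φ σm) := by ring
        calc |(R (φ σm) - R s₀) * β (φ σm)|
            = |⟪g σm - g t₀, ν s₀⟫ +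
              ((R (φ σm) - R s₀) * β (φ σm) - ⟪g σm - g t₀, ν s₀⟫)| := by rw [heq]
        _ ≤ |⟪g σm - g t₀, ν s₀⟫| +
              |(R (φ σm) - R s₀) * β (φ σm) - ⟪g σm - g t₀, ν s₀⟫| := abs_add_le _ _
        _ ≤ |⟪g σm - g t₀, ν s₀⟫| + D / 4 := by
              rw [abs_sub_comm]
              exact add_le_add le_rfl hb2
      have : D * (1/2) ≤ M * |t - t₀| + D / 4 := by
        rw [h5] at h6
        linarith [hn, h6, habs]
      linarith
    intro σ hσ
    exact le_trans (hσmax hσ) hDle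
  -- variation bound in terms of s-interval
  have hWt : ∀ t ∈ J, ∀ x ∈ uIcc s₀ (φ t), |R x - R s₀| ≤ 4 * M * |t - t₀| := by
    intro t ht x hx
    have hiv : uIcc (φ t₀) (φ t) ⊆ φ '' uIcc t₀ t :=
      intermediate_value_uIcc (hφc.mono (fun y hy => hJsub (hJord.uIcc_subset ht₀J ht hy)))
    obtain ⟨τ, hτ, hφτ⟩ := hiv hx
    rw [← hφτ]
    exact hD t ht τ hτ
  -- key estimates along g
  have hKEY : ∀ t ∈ J,
      |⟪g t - g t₀, T s₀⟫| ≤ 2 * Kκ * (4 * M * |t - t₀|) * |φ t - s₀| ∧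
      |⟪g t - g t₀, ν s₀⟫ - (R (φ t) - R s₀) * β (φ t)| ≤
        Kκ ^ 2 * (4 * M * |t - t₀|) * |φ t - s₀| ^ 2 := by
    intro t ht
    have hφtI : φ t ∈ I := hJI t ht
    have hkey := key_est γ T ν κ R ev s₀ (φ t) I hIconv Kκ (4 * M * |t - t₀|) hKκ
      (by positivity) kγ' kT' kν' kTunit hνdef kκbd kRκ hev hs₀I hφtI
      (hIord.uIcc_subset hs₀I hφtI) (hWt t ht)
    have hgval : ev (φ t) - ev (φ t₀) = g t - g t₀ := rfl
    rw [hgval] at hkey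
    exact hkey
  have htJmem : J ∈ 𝓝 t₀ := Icc_mem_nhds (by linarith) (by linarith)
  -- the derivative of R ∘ φ exists and equals u₀
  have hβφtend : Tendsto (fun t => β (φ t)) (𝓝 t₀) (𝓝 1) := by
    have h := hβcontAt.comp hφcontAt
    rw [ContinuousAt, Function.comp_apply] at h
    rwa [← hs₀def, hβs₀] at h
  have hderiv : HasDerivAt (fun t => R (φ t)) u₀ t₀ := by
    rw [hasDerivAt_iff_isLittleO, Asymptotics.isLittleO_iff]
    intro ε hε
    set ε2 : ℝ := ε / (8 * (|u₀| + 1)) with hε2def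
    have hε2pos : 0 < ε2 := by positivity
    set ε3 : ℝ := min 1 (ε / (32 * M * Kκ ^ 2)) with hε3def
    have hε3pos : 0 < ε3 := lt_min one_pos (by positivity)
    have E2 : ∀ᶠ t in 𝓝 t₀, ‖g t - g t₀ - (t - t₀) • G‖ ≤ ε / 8 * ‖t - t₀‖ :=
      Asymptotics.isLittleO_iff.1 (hasDerivAt_iff_isLittleO.1 (hgdiffAt t₀ ht₀))
        (by positivity)
    have E3 : ∀ᶠ t in 𝓝 t₀, |β (φ t) - 1| ≤ ε2 := by
      have := Metric.tendsto_nhds.mp hβφtend ε2 hε2pos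
      filter_upwards [this] with t ht
      rw [Real.dist_eq] at ht
      exact le_of_lt ht
    have E4 : ∀ᶠ t in 𝓝 t₀, |φ t - s₀| ≤ ε3 := by
      have h0 : Tendsto φ (𝓝 t₀) (𝓝 s₀) := hφcontAt
      have := Metric.tendsto_nhds.mp h0 ε3 hε3pos
      filter_upwards [this] with t ht
      rw [Real.dist_eq] at ht
      exact le_of_lt ht
    filter_upwards [htJmem, E2, E3, E4] with t htJ h2 h3 h4
    have hφtI : φ t ∈ I := hJI t htJ
    have hβt : 1/2 ≤ β (φ t) := hβI _ hφtI
    have hβt1 : β (φ t) ≤ 1 := hβle1 _ hφtI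
    obtain ⟨-, hb⟩ := hKEY t htJ
    -- |e| ≤ ε/8 |Δ|
    have hε3a : ε3 ≤ 1 := min_le_left _ _
    have hε3b : ε3 ≤ ε / (32 * M * Kκ ^ 2) := min_le_right _ _
    have h4' : |φ t - s₀| ^ 2 ≤ ε3 := by nlinarith [abs_nonneg (φ t - s₀)]
    have he : |⟪g t - g t₀, ν s₀⟫ - (R (φ t) - R s₀) * β (φ t)| ≤ ε / 8 * |t - t₀| := by
      refine le_trans hb ?_
      calc Kκ ^ 2 * (4 * M * |t - t₀|) * |φ t - s₀| ^ 2
          ≤ Kκ ^ 2 * (4 * M * |t - t₀|) * ε3 := by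
            apply mul_le_mul_of_nonneg_left h4' (by positivity)
        _ = (4 * M * Kκ ^ 2 * ε3) * |t - t₀| := by ring
        _ ≤ (4 * M * Kκ ^ 2 * (ε / (32 * M * Kκ ^ 2))) * |t - t₀| := by
            apply mul_le_mul_of_nonneg_right _ (abs_nonneg _)
            exact mul_le_mul_of_nonneg_left hε3b (by positivity)
        _ = ε / 8 * |t - t₀| := by field_simp; ring
    have hn2 : |⟪g t - g t₀, ν s₀⟫ - (t - t₀) * u₀| ≤ ε / 8 * |t - t₀| := by
      have heq : ⟪g t - g t₀, ν s₀⟫ - (t - t₀) * u₀ = ⟪g t - g t₀ - (t - t₀) • G, ν s₀⟫ := by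
        rw [hu₀def]
        simp only [inner_sub_left, real_inner_smul_left]
        try ring
      rw [heq]
      calc |⟪g t - g t₀ - (t - t₀) • G, ν s₀⟫|
          ≤ ‖g t - g t₀ - (t - t₀) • G‖ * ‖ν s₀‖ := abs_real_inner_le_norm _ _
        _ = ‖g t - g t₀ - (t - t₀) • G‖ := by rw [hνnorm s₀ hs₀, mul_one]
        _ ≤ ε / 8 * ‖t - t₀‖ := h2
        _ = ε / 8 * |t - t₀| := by rw [Real.norm_eq_abs]
    have hu3 : |(t - t₀) * u₀ * (β (φ t) - 1)| ≤ ε / 8 * |t - t₀| := by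
      rw [abs_mul, abs_mul]
      calc |t - t₀| * |u₀| * |β (φ t) - 1| ≤ |t - t₀| * |u₀| * ε2 := by
            exact mul_le_mul_of_nonneg_left h3 (by positivity)
        _ ≤ ε / 8 * |t - t₀| := by
            rw [hε2def]
            have h9 : |u₀| * (ε / (8 * (|u₀| + 1))) ≤ ε / 8 := by
              rw [show |u₀| * (ε / (8 * (|u₀| + 1))) = (|u₀| * ε) / (8 * (|u₀| + 1)) by ring]
              rw [div_le_div_iff₀ (by positivity) (by norm_num)]
              nlinarith [abs_nonneg u₀, hε.le]
            calc |t - t₀| * |u₀| * (ε / (8 * (|u₀| + 1)))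
                = (|u₀| * (ε / (8 * (|u₀| + 1)))) * |t - t₀| := by ring
              _ ≤ ε / 8 * |t - t₀| := mul_le_mul_of_nonneg_right h9 (abs_nonneg _)
    -- combine
    have hid : ((R (φ t) - R s₀) - (t - t₀) * u₀) * β (φ t) =
        (⟪g t - g t₀, ν s₀⟫ - (t - t₀) * u₀)
        - (⟪g t - g t₀, ν s₀⟫ - (R (φ t) - R s₀) * β (φ t))
        - (t - t₀) * u₀ * (β (φ t) - 1) := by ring
    have hcomb : |((R (φ t) - R s₀) - (t - t₀) * u₀) * β (φ t)| ≤ 3 * (ε / 8) * |t - t₀| := by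
      rw [hid]
      have t1 := abs_sub (⟪g t - g t₀, ν s₀⟫ - (t - t₀) * u₀)
        (⟪g t - g t₀, ν s₀⟫ - (R (φ t) - R s₀) * β (φ t))
      have t2 := abs_sub ((⟪g t - g t₀, ν s₀⟫ - (t - t₀) * u₀)
        - (⟪g t - g t₀, ν s₀⟫ - (R (φ t) - R s₀) * β (φ t))) ((t - t₀) * u₀ * (β (φ t) - 1))
      linarith
    have hfin : |(R (φ t) - R s₀) - (t - t₀) * u₀| ≤ ε * |t - t₀| := by
      have hbpos : (0:ℝ) < β (φ t) := by linarith
      rw [abs_mul, abs_of_pos hbpos] at hcomb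
      nlinarith [abs_nonneg ((R (φ t) - R s₀) - (t - t₀) * u₀), abs_nonneg (t - t₀), hε.le]
    show ‖R (φ t) - R (φ t₀) - (t - t₀) • u₀‖ ≤ ε * ‖t - t₀‖
    rw [Real.norm_eq_abs, Real.norm_eq_abs, smul_eq_mul]
    exact hfin
  -- the derivative is nonzero
  have hne : u₀ ≠ 0 := by
    intro hu0
    set lam : ℝ := ⟪G, T s₀⟫ with hlamdef
    have hlam : lam ≠ 0 := by
      intro hlam0
      have hsq := sq_decomp (T s₀) G (hTunit s₀ hs₀)
      rw [← hνdef s₀] at hsq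
      have : ⟪G, G⟫ = (0:ℝ) := by
        rw [← hsq, ← hlamdef]
        rw [← hu₀def] at *
        rw [hlam0, hu0]
        norm_num
      exact hg'ne (inner_self_eq_zero.1 this)
    have hlampos : 0 < |lam| := abs_pos.mpr hlam
    set ε5 : ℝ := |lam| / (32 * M * Kκ) with hε5def
    have hε5pos : 0 < ε5 := by positivity
    have F2 : ∀ᶠ t in 𝓝 t₀, ‖g t - g t₀ - (t - t₀) • G‖ ≤ |lam| / 4 * ‖t - t₀‖ :=
      Asymptotics.isLittleO_iff.1 (hasDerivAt_iff_isLittleO.1 (hgdiffAt t₀ ht₀))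
        (by positivity)
    have F4 : ∀ᶠ t in 𝓝 t₀, |φ t - s₀| ≤ ε5 := by
      have h0 : Tendsto φ (𝓝 t₀) (𝓝 s₀) := hφcontAt
      have := Metric.tendsto_nhds.mp h0 ε5 hε5pos
      filter_upwards [this] with t ht
      rw [Real.dist_eq] at ht
      exact le_of_lt ht
    have hJev : ∀ᶠ t' in 𝓝 t₀, t' ∈ J := htJmem
    have hall := (hJev.and (F2.and F4))
    obtain ⟨r, hrpos, hr⟩ := Metric.eventually_nhds_iff.1 hall
    set t : ℝ := t₀ + r / 2 with htdef
    have htt : dist t t₀ < r := by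
      rw [Real.dist_eq, htdef]
      rw [show t₀ + r / 2 - t₀ = r / 2 by ring, abs_of_pos (by linarith)]
      linarith
    obtain ⟨htJ, h2, h3⟩ := hr htt
    have hΔ : t - t₀ = r / 2 := by rw [htdef]; ring
    have ha := (hKEY t htJ).1
    have hbound : |⟪g t - g t₀, T s₀⟫| ≤ |lam| / 4 * |t - t₀| := by
      refine le_trans ha ?_
      calc 2 * Kκ * (4 * M * |t - t₀|) * |φ t - s₀|
          ≤ 2 * Kκ * (4 * M * |t - t₀|) * ε5 := by
            apply mul_le_mul_of_nonneg_left h3 (by positivity)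
        _ = (8 * M * Kκ * ε5) * |t - t₀| := by ring
        _ = (8 * M * Kκ * (|lam| / (32 * M * Kκ))) * |t - t₀| := by rw [hε5def]
        _ = |lam| / 4 * |t - t₀| := by
            congr 1
            field_simp
            ring
    have herr2 : |lam * (t - t₀) - ⟪g t - g t₀, T s₀⟫| ≤ |lam| / 4 * |t - t₀| := by
      have heq : lam * (t - t₀) - ⟪g t - g t₀, T s₀⟫ = -⟪g t - g t₀ - (t - t₀) • G, T s₀⟫ := by
        rw [hlamdef]
        simp only [inner_sub_left, real_inner_smul_left]
        try ring
      rw [heq, abs_neg]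
      calc |⟪g t - g t₀ - (t - t₀) • G, T s₀⟫|
          ≤ ‖g t - g t₀ - (t - t₀) • G‖ * ‖T s₀‖ := abs_real_inner_le_norm _ _
        _ = ‖g t - g t₀ - (t - t₀) • G‖ := by rw [hTnorm s₀ hs₀, mul_one]
        _ ≤ |lam| / 4 * ‖t - t₀‖ := h2
        _ = |lam| / 4 * |t - t₀| := by rw [Real.norm_eq_abs]
    have htri : |lam * (t - t₀)| ≤ |lam| / 2 * |t - t₀| := by
      have h5 := abs_add_le (⟪g t - g t₀, T s₀⟫) (lam * (t - t₀) - ⟪g t - g t₀, T s₀⟫)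
      rw [show ⟪g t - g t₀, T s₀⟫ + (lam * (t - t₀) - ⟪g t - g t₀, T s₀⟫) = lam * (t - t₀)
        by ring] at h5
      calc |lam * (t - t₀)| ≤ |⟪g t - g t₀, T s₀⟫| +
            |lam * (t - t₀) - ⟪g t - g t₀, T s₀⟫| := h5
        _ ≤ |lam| / 4 * |t - t₀| + |lam| / 4 * |t - t₀| := add_le_add hbound herr2
        _ = |lam| / 2 * |t - t₀| := by ring
    rw [abs_mul, hΔ, abs_of_pos (by linarith : (0:ℝ) < r / 2)] at htri
    nlinarith
  exact ⟨hderiv, hne⟩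

lemma mono_or_anti {φ : ℝ → ℝ} {c d : ℝ} (hcd : c < d)
    (hφc : ContinuousOn φ (Ioo c d)) (hinj : InjOn φ (Ioo c d)) :
    StrictMonoOn φ (Ioo c d) ∨ StrictAntiOn φ (Ioo c d) := by
  set x₀ : ℝ := c + (d - c)/3 with hx₀def
  set y₀ : ℝ := d - (d - c)/3 with hy₀def
  have hx₀ : x₀ ∈ Ioo c d := ⟨by rw [hx₀def]; linarith, by rw [hx₀def]; linarith⟩
  have hy₀ : y₀ ∈ Ioo c d := ⟨by rw [hy₀def]; linarith, by rw [hy₀def]; linarith⟩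
  have hxy : x₀ < y₀ := by rw [hx₀def, hy₀def]; linarith
  have hIccsub : ∀ {p q : ℝ}, p ∈ Ioo c d → q ∈ Ioo c d → Icc p q ⊆ Ioo c d :=
    fun hp hq => Icc_subset_Ioo hp.1 hq.2
  have key : ∀ p q : ℝ, p ∈ Ioo c d → q ∈ Ioo c d → p ≤ q →
      StrictMonoOn φ (Icc p q) ∨ StrictAntiOn φ (Icc p q) := fun p q hp hq hpq =>
    ContinuousOn.strictMonoOn_of_injOn_Icc' hpq (hφc.mono (hIccsub hp hq))
      (hinj.mono (hIccsub hp hq))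
  rcases lt_trichotomy (φ x₀) (φ y₀) with h | h | h
  · left
    intro x hx y hy hxy2
    set p : ℝ := min x x₀ with hpdef
    set q : ℝ := max y y₀ with hqdef
    have hp : p ∈ Ioo c d := ⟨lt_min hx.1 hx₀.1, lt_of_le_of_lt (min_le_left _ _) hx.2⟩
    have hq : q ∈ Ioo c d := ⟨lt_of_lt_of_le hy.1 (le_max_left _ _), max_lt hy.2 hy₀.2⟩
    have hpq : p ≤ q := le_trans (min_le_right _ _) (le_trans hxy.le (le_max_right _ _))
    have hxm : x ∈ Icc p q := ⟨min_le_left _ _, le_trans hxy2.le (le_max_left _ _)⟩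
    have hym : y ∈ Icc p q := ⟨le_trans (min_le_left _ _) hxy2.le, le_max_left _ _⟩
    have hx₀m : x₀ ∈ Icc p q := ⟨min_le_right _ _, le_trans hxy.le (le_max_right _ _)⟩
    have hy₀m : y₀ ∈ Icc p q := ⟨le_trans (min_le_right _ _) hxy.le, le_max_right _ _⟩
    rcases key p q hp hq hpq with hm | ha
    · exact hm hxm hym hxy2
    · exact absurd (ha hx₀m hy₀m hxy) (by linarith)
  · exact absurd (hinj hx₀ hy₀ h) (ne_of_lt hxy)
  · right
    intro x hx y hy hxy2
    set p : ℝ := min x x₀ with hpdef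
    set q : ℝ := max y y₀ with hqdef
    have hp : p ∈ Ioo c d := ⟨lt_min hx.1 hx₀.1, lt_of_le_of_lt (min_le_left _ _) hx.2⟩
    have hq : q ∈ Ioo c d := ⟨lt_of_lt_of_le hy.1 (le_max_left _ _), max_lt hy.2 hy₀.2⟩
    have hpq : p ≤ q := le_trans (min_le_right _ _) (le_trans hxy.le (le_max_right _ _))
    have hxm : x ∈ Icc p q := ⟨min_le_left _ _, le_trans hxy2.le (le_max_left _ _)⟩
    have hym : y ∈ Icc p q := ⟨le_trans (min_le_left _ _) hxy2.le, le_max_left _ _⟩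
    have hx₀m : x₀ ∈ Icc p q := ⟨min_le_right _ _, le_trans hxy.le (le_max_right _ _)⟩
    have hy₀m : y₀ ∈ Icc p q := ⟨le_trans (min_le_right _ _) hxy.le, le_max_right _ _⟩
    rcases key p q hp hq hpq with hm | ha
    · exact absurd (hm hx₀m hy₀m hxy) (by linarith)
    · exact ha hxm hym hxy2


/-- if the evolute is `C¹`-regular then `R` is strictly monotone. -/
theorem strictMono_radius_of_evolute_C1_regular
    (a b : ℝ) (hab : a < b) (γ ν ev : ℝ → Plane) (κ R : ℝ → ℝ)
    (hγ : ContDiffOn ℝ 2 γ (Ioo a b))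
    (harc : ∀ s ∈ Ioo a b, ‖deriv γ s‖ = 1)
    (hν : ∀ s, ν s = Jrot (deriv γ s))
    (hκdef : ∀ s, κ s = ⟪deriv (deriv γ) s, ν s⟫)
    (hκ : ∀ s ∈ Ioo a b, κ s ≠ 0)
    (hR : ∀ s, R s = (κ s)⁻¹)
    (hev : ∀ s, ev s = γ s + R s • ν s)
    (hreg : CkAlphaRegularOn 1 0 ev a b) :
    StrictMonoOn R (Ioo a b) ∨ StrictAntiOn R (Ioo a b) := by
  obtain ⟨c, d, hcd, φ, hφc, hφbij, ⟨hgc1, -⟩, hg'⟩ := hreg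
  set T := deriv γ with hTdef
  have hIo : IsOpen (Ioo a b) := isOpen_Ioo
  have hγdiff : DifferentiableOn ℝ γ (Ioo a b) := hγ.differentiableOn two_ne_zero
  have hγ'at : ∀ s ∈ Ioo a b, HasDerivAt γ (T s) s := fun s hs =>
    (hγdiff.differentiableAt (hIo.mem_nhds hs)).hasDerivAt
  have hTc1 : ContDiffOn ℝ 1 T (Ioo a b) := hγ.deriv_of_isOpen hIo (by norm_num)
  have hT'at : ∀ s ∈ Ioo a b, HasDerivAt T (deriv T s) s := fun s hs =>
    ((hTc1.differentiableOn one_ne_zero).differentiableAt (hIo.mem_nhds hs)).hasDerivAt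
  have hTT : ∀ s ∈ Ioo a b, ⟪T s, T s⟫ = 1 := fun s hs => by
    rw [real_inner_self_eq_norm_mul_norm, harc s hs]; norm_num
  have horto : ∀ s ∈ Ioo a b, ⟪deriv T s, T s⟫ = 0 := by
    intro s hs
    have hq : HasDerivAt (fun σ => ⟪T σ, T σ⟫) (⟪T s, deriv T s⟫ + ⟪deriv T s, T s⟫) s :=
      (hT'at s hs).inner ℝ (hT'at s hs)
    have hconst : (fun σ => ⟪T σ, T σ⟫) =ᶠ[𝓝 s] fun _ => (1:ℝ) := by
      filter_upwards [hIo.mem_nhds hs] with σ hσ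
      exact hTT σ hσ
    have hq0 : HasDerivAt (fun σ => ⟪T σ, T σ⟫) 0 s :=
      (hasDerivAt_const s (1:ℝ)).congr_of_eventuallyEq hconst
    have huniq := hq.unique hq0
    have h2 := real_inner_comm (deriv T s) (T s)
    linarith
  have hκν : ∀ s ∈ Ioo a b, deriv T s = κ s • ν s := by
    intro s hs
    have hdec := vec_decomp (T s) (deriv T s) (hTT s hs)
    rw [horto s hs, ← hν s, ← hκdef s] at hdec
    rw [hdec]
    simp
  have hT'κ : ∀ s ∈ Ioo a b, HasDerivAt T (κ s • ν s) s := fun s hs =>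
    (hT'at s hs).congr_deriv (hκν s hs)
  have hν'at : ∀ s ∈ Ioo a b, HasDerivAt ν (-(κ s) • T s) s := by
    intro s hs
    have h1 : HasDerivAt (fun σ => Jrot (T σ)) (Jrot (κ s • ν s)) s :=
      hasDerivAt_Jrot (hT'κ s hs)
    have h2 : ν = fun σ => Jrot (T σ) := funext hν
    rw [← h2] at h1
    refine h1.congr_deriv ?_
    rw [Jrot_smul, hν s, Jrot_Jrot, smul_neg, ← neg_smul]
  have hγ''cont : ContinuousOn (deriv T) (Ioo a b) :=
    hTc1.continuousOn_deriv_of_isOpen hIo le_rfl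
  have hνcont : ContinuousOn ν (Ioo a b) := by
    have h1 : ContinuousOn (fun σ => Jrot (T σ)) (Ioo a b) :=
      continuous_Jrot.comp_continuousOn hTc1.continuousOn
    rwa [show (fun σ => Jrot (T σ)) = ν from (funext hν).symm] at h1
  have hκcont : ContinuousOn κ (Ioo a b) := by
    have h1 : ContinuousOn (fun s => ⟪deriv T s, ν s⟫) (Ioo a b) := hγ''cont.inner hνcont
    rwa [show (fun s => ⟪deriv T s, ν s⟫) = κ from (funext hκdef).symm] at h1
  have hRcont : ContinuousOn R (Ioo a b) := by
    have h1 : ContinuousOn (fun s => (κ s)⁻¹) (Ioo a b) := hκcont.inv₀ hκ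
    rwa [show (fun s => (κ s)⁻¹) = R from (funext hR).symm] at h1
  have hRκ1 : ∀ s ∈ Ioo a b, R s * κ s = 1 := fun s hs => by
    rw [hR s]; exact inv_mul_cancel₀ (hκ s hs)
  have hmain : ∀ t₀ ∈ Ioo c d,
      HasDerivAt (fun t => R (φ t)) ⟪deriv (ev ∘ φ) t₀, ν (φ t₀)⟫ t₀ ∧
      ⟪deriv (ev ∘ φ) t₀, ν (φ t₀)⟫ ≠ 0 := fun t₀ ht₀ =>
    main_local γ T ν κ R ev φ a b c d t₀ hγ'at hT'κ hν'at hTT hν hκcont hRcont hRκ1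
      hev hνcont hφc hφbij.mapsTo hgc1 ht₀ (hg' t₀ ht₀)
  set u : ℝ → ℝ := fun t => ⟪deriv (ev ∘ φ) t, ν (φ t)⟫ with hudef
  have hu : ∀ t ∈ Ioo c d, HasDerivAt (fun t' => R (φ t')) (u t) t := fun t ht =>
    (hmain t ht).1
  have hune : ∀ t ∈ Ioo c d, u t ≠ 0 := fun t ht => (hmain t ht).2
  have hucont : ContinuousOn u (Ioo c d) :=
    (hgc1.continuousOn_deriv_of_isOpen isOpen_Ioo le_rfl).inner
      (hνcont.comp hφc hφbij.mapsTo)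
  have hsign : (∀ t ∈ Ioo c d, 0 < u t) ∨ (∀ t ∈ Ioo c d, u t < 0) := by
    by_contra hcon
    push_neg at hcon
    obtain ⟨⟨t₁, ht₁, h₁⟩, ⟨t₂, ht₂, h₂⟩⟩ := hcon
    have h₁' : u t₁ < 0 := lt_of_le_of_ne h₁ (hune t₁ ht₁)
    have h₂' : 0 < u t₂ := lt_of_le_of_ne h₂ (Ne.symm (hune t₂ ht₂))
    have hsubu : uIcc t₁ t₂ ⊆ Ioo c d := (Set.ordConnected_Ioo).uIcc_subset ht₁ ht₂
    have hiv := intermediate_value_uIcc (hucont.mono hsubu)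
    have h0mem : (0:ℝ) ∈ uIcc (u t₁) (u t₂) := by
      rw [Set.mem_uIcc]
      left
      exact ⟨h₁'.le, h₂'.le⟩
    obtain ⟨z, hz, hz0⟩ := hiv h0mem
    exact hune z (hsubu hz) hz0
  have hRφ : StrictMonoOn (fun t => R (φ t)) (Ioo c d) ∨
      StrictAntiOn (fun t => R (φ t)) (Ioo c d) := by
    have hcont : ContinuousOn (fun t => R (φ t)) (Ioo c d) := hRcont.comp hφc hφbij.mapsTo
    rcases hsign with hp | hn
    · left
      apply strictMonoOn_of_deriv_pos (convex_Ioo c d) hcont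
      intro x hx
      rw [interior_Ioo] at hx
      rw [(hu x hx).deriv]
      exact hp x hx
    · right
      apply strictAntiOn_of_deriv_neg (convex_Ioo c d) hcont
      intro x hx
      rw [interior_Ioo] at hx
      rw [(hu x hx).deriv]
      exact hn x hx
  have hφmono := mono_or_anti hcd hφc hφbij.injOn
  have hsurj := hφbij.surjOn
  have hgetT : ∀ {s₁ s₂ : ℝ}, s₁ ∈ Ioo a b → s₂ ∈ Ioo a b → s₁ < s₂ →
      ∃ t₁ ∈ Ioo c d, ∃ t₂ ∈ Ioo c d, φ t₁ = s₁ ∧ φ t₂ = s₂ ∧ t₁ ≠ t₂ := by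
    intro s₁ s₂ hs₁ hs₂ h12
    obtain ⟨t₁, ht₁, e₁⟩ := hsurj hs₁
    obtain ⟨t₂, ht₂, e₂⟩ := hsurj hs₂
    refine ⟨t₁, ht₁, t₂, ht₂, e₁, e₂, ?_⟩
    intro hteq
    rw [hteq, e₂] at e₁
    exact absurd e₁ (ne_of_gt h12)
  rcases hRφ with hR1 | hR1 <;> rcases hφmono with hφ1 | hφ1
  · -- R∘φ mono, φ mono : R mono
    left
    intro s₁ hs₁ s₂ hs₂ h12
    obtain ⟨t₁, ht₁, t₂, ht₂, e₁, e₂, hne⟩ := hgetT hs₁ hs₂ h12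
    have ht12 : t₁ < t₂ := by
      rcases lt_or_gt_of_ne hne with h | h
      · exact h
      · exfalso
        have := hφ1 ht₂ ht₁ h
        rw [e₁, e₂] at this
        linarith
    have := hR1 ht₁ ht₂ ht12
    simp only [e₁, e₂] at this
    exact this
  · -- R∘φ mono, φ anti : R anti
    right
    intro s₁ hs₁ s₂ hs₂ h12
    obtain ⟨t₁, ht₁, t₂, ht₂, e₁, e₂, hne⟩ := hgetT hs₁ hs₂ h12
    have ht12 : t₂ < t₁ := by
      rcases lt_or_gt_of_ne hne with h | h
      · exfalso
        have := hφ1 ht₁ ht₂ h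
        rw [e₁, e₂] at this
        linarith
      · exact h
    have := hR1 ht₂ ht₁ ht12
    simp only [e₁, e₂] at this
    exact this
  · -- R∘φ anti, φ mono : R anti
    right
    intro s₁ hs₁ s₂ hs₂ h12
    obtain ⟨t₁, ht₁, t₂, ht₂, e₁, e₂, hne⟩ := hgetT hs₁ hs₂ h12
    have ht12 : t₁ < t₂ := by
      rcases lt_or_gt_of_ne hne with h | h
      · exact h
      · exfalso
        have := hφ1 ht₂ ht₁ h
        rw [e₁, e₂] at this
        linarith
    have := hR1 ht₁ ht₂ ht12
    simp only [e₁, e₂] at this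
    exact this
  · -- R∘φ anti, φ anti : R mono
    left
    intro s₁ hs₁ s₂ hs₂ h12
    obtain ⟨t₁, ht₁, t₂, ht₂, e₁, e₂, hne⟩ := hgetT hs₁ hs₂ h12
    have ht12 : t₂ < t₁ := by
      rcases lt_or_gt_of_ne hne with h | h
      · exfalso
        have := hφ1 ht₁ ht₂ h
        rw [e₁, e₂] at this
        linarith
      · exact h
    have := hR1 ht₂ ht₁ ht12
    simp only [e₁, e₂] at this
    exact this
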